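/- Let k be a natural number with 1 ≤ k ≤ 100 such that k does not divide 100, and let A be a finite set with |A| > ⌊100/k⌋. Then there exists a probability distribution P : A → ℝ on A with P(s) > 0 for every s ∈ A such that the set M = {s ∈ A : P(s) ≥ k/100} has cardinality exactly ⌊100/k⌋. (Sharpness of the second case of the paper's Theorem A.1 when 100 mod k ≠ 0 and |A| > ⌊100/k⌋: the upper bound ⌊100/k⌋ is attained, e.g., by assigning probability k/100 to each of ⌊100/k⌋ chosen states and distributing the remaining mass ε·k/100, where ε = 100/k − ⌊100/k⌋ > 0, in positive amounts strictly below k/100 over the other states.) -/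

import Mathlib

/-- Sharpness of the second case of the paper's Theorem A.1 when `100 mod k ≠ 0` and
`|A| > ⌊100/k⌋`: there is a strictly positive probability distribution `P` on `A` with
`|{s ∈ A : P s ≥ k/100}| = ⌊100/k⌋`. -/
theorem pseudo_attractor_bound_sharp_of_not_dvd {α : Type*} (A : Finset α)
    (k : ℕ) (hk1 : 1 ≤ k) (hk100 : k ≤ 100) (hndvd : ¬ k ∣ 100)
    (hcard : ⌊(100 : ℝ) / (k : ℝ)⌋ < (A.card : ℤ)) :
    ∃ P : α → ℝ, (∀ s ∈ A, 0 < P s) ∧ (∑ s ∈ A, P s = 1) ∧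
      ({s ∈ (A : Set α) | P s ≥ (k : ℝ) / 100}.ncard : ℤ) = ⌊(100 : ℝ) / (k : ℝ)⌋ := by
  classical
  set m : ℕ := 100 / k with hm
  set r : ℕ := 100 % k with hr
  have hfloor : ⌊(100 : ℝ) / (k : ℝ)⌋ = (m : ℤ) := by
    have h1 : ((100 : ℝ) / (k : ℝ)) = (((100 / k : ℚ)) : ℝ) := by push_cast; ring
    rw [h1, Rat.floor_cast]
    exact_mod_cast Rat.floor_natCast_div_natCast 100 k
  have hrpos : 0 < r := Nat.pos_of_ne_zero (fun h => hndvd (Nat.dvd_of_mod_eq_zero h))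
  have hrk : r < k := Nat.mod_lt _ (by omega)
  have hmn : m < A.card := by
    rw [hfloor] at hcard; exact_mod_cast hcard
  obtain ⟨B, hBA, hBcard⟩ := Finset.exists_subset_card_eq (s := A) (n := m) (le_of_lt hmn)
  have hnm : 0 < A.card - m := by omega
  set c : ℝ := (r : ℝ) / (100 * (A.card - m : ℕ)) with hc
  have hcpos : 0 < c := by
    apply div_pos (by exact_mod_cast hrpos)
    positivity
  have hclt : c < (k : ℝ) / 100 := by
    rw [hc, div_lt_div_iff₀ (by positivity) (by norm_num)]
    have h1 : (1 : ℝ) ≤ ((A.card - m : ℕ) : ℝ) := by exact_mod_cast hnm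
    have h2 : (r : ℝ) < (k : ℝ) := by exact_mod_cast hrk
    have hk0 : (0 : ℝ) < (k : ℝ) := by exact_mod_cast hk1
    nlinarith
  refine ⟨fun s => if s ∈ B then (k : ℝ) / 100 else c, ?_, ?_, ?_⟩
  · intro s _
    by_cases h : s ∈ B <;> simp [h]
    · positivity
    · exact hcpos
  · rw [← Finset.sum_sdiff hBA]
    have e1 : ∑ s ∈ A \ B, (if s ∈ B then (k : ℝ) / 100 else c) = (A.card - m : ℕ) * c := by
      rw [Finset.sum_congr rfl (fun s hs => if_neg (Finset.mem_sdiff.mp hs).2),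
        Finset.sum_const, Finset.card_sdiff_of_subset hBA, hBcard, nsmul_eq_mul]
    have e2 : ∑ s ∈ B, (if s ∈ B then (k : ℝ) / 100 else c) = (m : ℝ) * ((k : ℝ) / 100) := by
      rw [Finset.sum_congr rfl (fun s hs => if_pos hs), Finset.sum_const, hBcard, nsmul_eq_mul]
    rw [e1, e2, hc]
    have hnm' : ((A.card - m : ℕ) : ℝ) ≠ 0 := by positivity
    have hsum : (k : ℝ) * m + r = 100 := by exact_mod_cast Nat.div_add_mod 100 k
    field_simp
    linear_combination hsum
  · have hset : {s ∈ (A : Set α) | (if s ∈ B then (k : ℝ) / 100 else c) ≥ (k : ℝ) / 100} = ↑B := by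
      ext s
      simp only [Set.mem_setOf_eq, Finset.coe_sort_coe, Finset.mem_coe]
      constructor
      · rintro ⟨hsA, hge⟩
        by_contra h
        rw [if_neg h] at hge
        exact absurd hge (not_le.mpr hclt)
      · intro h
        exact ⟨hBA h, by rw [if_pos h]⟩
    rw [hset, Set.ncard_coe_finset, hBcard, hfloor]
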